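/- The extended zero-divisor graph Γ̃(R) of a commutative ring R is connected with diameter at most 2. -/

import Mathlib

/-- the extended zero-divisor graph Γ̃(R), on the nonzero zero-divisors of R -/
def extGraph (R : Type*) [CommRing R] :
    SimpleGraph {x : R // x ≠ 0 ∧ ∃ y ≠ 0, x * y = 0} where
  Adj a b := a ≠ b ∧ ((a : R) * b = 0 ∨ ∃ z ≠ 0, ((a : R) + b) * z = 0)
  symm := ⟨fun a b => by
    rintro ⟨hne, h | ⟨z, hz, h⟩⟩
    · exact ⟨hne.symm, Or.inl (by rw [mul_comm] at h; exact h)⟩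
    · exact ⟨hne.symm, Or.inr ⟨z, hz, by rw [add_comm] at h; exact h⟩⟩⟩
  loopless := ⟨fun a => by simp⟩

lemma extGraph_key {R : Type*} [CommRing R]
    (a b : {x : R // x ≠ 0 ∧ ∃ y ≠ 0, x * y = 0}) (hab : a ≠ b) :
    (extGraph R).Adj a b ∨ ∃ c, (extGraph R).Adj a c ∧ (extGraph R).Adj c b := by
  obtain ⟨ha0, x, hx0, hax⟩ := a.2
  obtain ⟨hb0, y, hy0, hby⟩ := b.2
  by_cases h : (a : R) * b = 0
  · exact Or.inl ⟨hab, Or.inl h⟩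
  by_cases hA : (a : R) * b = a
  · -- use c = y
    have hay : (a : R) * y = 0 := by
      calc (a : R) * y = ((a : R) * b) * y := by rw [hA]
      _ = (a : R) * ((b : R) * y) := by ring
      _ = 0 := by rw [hby, mul_zero]
    have hyb : y * (b : R) = 0 := by rw [mul_comm]; exact hby
    refine Or.inr ⟨⟨y, hy0, b, hb0, hyb⟩, ⟨?_, Or.inl hay⟩, ⟨?_, Or.inl hyb⟩⟩
    · intro hc; apply h
      have : (a : R) = y := congrArg Subtype.val hc
      rw [this, mul_comm]; exact hby
    · intro hc; apply h
      have : y = (b : R) := congrArg Subtype.val hc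
      rw [← this]; exact hay
  by_cases hB : (a : R) * b = b
  · -- use c = x
    have hbx : (b : R) * x = 0 := by
      calc (b : R) * x = ((a : R) * b) * x := by rw [hB]
      _ = (b : R) * ((a : R) * x) := by ring
      _ = 0 := by rw [hax, mul_zero]
    refine Or.inr ⟨⟨x, hx0, a, ha0, by rw [mul_comm]; exact hax⟩,
      ⟨?_, Or.inl hax⟩, ⟨?_, Or.inl (by rw [mul_comm]; exact hbx)⟩⟩
    · intro hc; apply h
      have : (a : R) = x := congrArg Subtype.val hc
      rw [this, mul_comm]; exact hbx
    · intro hc; apply h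
      have : x = (b : R) := congrArg Subtype.val hc
      rw [← this]; exact hax
  · -- use c = a*b
    have habx : ((a : R) * b) * x = 0 := by
      calc ((a : R) * b) * x = (b : R) * ((a : R) * x) := by ring
      _ = 0 := by rw [hax, mul_zero]
    refine Or.inr ⟨⟨(a : R) * b, h, x, hx0, habx⟩, ⟨?_, Or.inr ⟨x, hx0, ?_⟩⟩,
      ⟨?_, Or.inr ⟨y, hy0, ?_⟩⟩⟩
    · intro hc; exact hA (congrArg Subtype.val hc).symm
    · calc ((a : R) + (a : R) * b) * x = (1 + (b : R)) * ((a : R) * x) := by ring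
        _ = 0 := by rw [hax, mul_zero]
    · intro hc; exact hB (congrArg Subtype.val hc)
    · calc ((a : R) * b + b) * y = ((a : R) + 1) * ((b : R) * y) := by ring
        _ = 0 := by rw [hby, mul_zero]

theorem stmt1 {R : Type*} [CommRing R] [Nontrivial R]
    (hne : ∃ x : R, x ≠ 0 ∧ ∃ y ≠ 0, x * y = 0) :
    (extGraph R).Connected ∧ ∀ a b, (extGraph R).edist a b ≤ 2 := by
  have key := extGraph_key (R := R)
  have : Nonempty {x : R // x ≠ 0 ∧ ∃ y ≠ 0, x * y = 0} := by
    obtain ⟨x, hx⟩ := hne; exact ⟨⟨x, hx⟩⟩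
  constructor
  · refine ⟨fun u v => ?_⟩
    by_cases huv : u = v
    · exact huv ▸ SimpleGraph.Reachable.refl u
    · rcases key u v huv with h | ⟨c, h1, h2⟩
      · exact h.reachable
      · exact h1.reachable.trans h2.reachable
  · intro a b
    by_cases hab : a = b
    · subst hab; simp
    · rcases key a b hab with h | ⟨c, h1, h2⟩
      · calc (extGraph R).edist a b ≤ (h.toWalk).length :=
            SimpleGraph.Walk.edist_le _
          _ ≤ 2 := by simp
      · calc (extGraph R).edist a b
            ≤ (SimpleGraph.Walk.cons h1 h2.toWalk).length :=
            SimpleGraph.Walk.edist_le _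
          _ ≤ 2 := by simp
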